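/- Let G and H be simple graphs on finite vertex types, and let G ⊗ H be their tensor product. Then for all vertices u of G and v of H, dp_{G⊗H}((u,v)) = ∑_{u' ∈ N_G(u)} ∑_{v' ∈ N_H(v)} X^{deg_G(u') · deg_H(v')} in ℕ[X]. (Equivalently, dp_{G⊗H}((u,v)) is the tensor product dp_G(u) ⊗ dp_H(v) of polynomials, where (∑ a_i X^i) ⊗ (∑ b_j X^j) := ∑_{i,j} a_i b_j X^{i·j}.) -/

import Mathlib

open Polynomial

/-- The neighbor finset of a vertex (with classical decidability of adjacency). -/
noncomputable def nbhd {V : Type*} [Fintype V] (G : SimpleGraph V) (v : V) : Finset V :=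
  letI := Classical.decRel G.Adj
  G.neighborFinset v

/-- The degree of a vertex (with classical decidability of adjacency). -/
noncomputable def degc {V : Type*} [Fintype V] (G : SimpleGraph V) (v : V) : ℕ :=
  (nbhd G v).card

/-- The degree polynomial of a vertex `v`: the coefficient of `X^i` is the number
of neighbors of `v` having degree `i`. -/
noncomputable def dp {V : Type*} [Fintype V] (G : SimpleGraph V) (v : V) : ℕ[X] :=
  ∑ w ∈ nbhd G v, X ^ degc G w

/-- The degree polynomial of a graph `G`: the coefficient of `X^i` is the number
of vertices of `G` of degree `i`. -/
noncomputable def dpG {V : Type*} [Fintype V] (G : SimpleGraph V) : ℕ[X] :=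
  ∑ v, X ^ degc G v

/-- The tensor product of two simple graphs. -/
def tensorProd {α β : Type*} (G : SimpleGraph α) (H : SimpleGraph β) :
    SimpleGraph (α × β) where
  Adj x y := G.Adj x.1 y.1 ∧ H.Adj x.2 y.2
  symm := by refine ⟨?_⟩; rintro ⟨a, b⟩ ⟨c, d⟩ ⟨h₁, h₂⟩; exact ⟨h₁.symm, h₂.symm⟩
  loopless := by refine ⟨?_⟩; rintro ⟨a, b⟩ ⟨h, -⟩; exact G.loopless.irrefl a h


lemma mem_nbhd {V : Type*} [Fintype V] (G : SimpleGraph V) (v w : V) :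
    w ∈ nbhd G v ↔ G.Adj v w := by
  classical
  simp [nbhd, SimpleGraph.mem_neighborFinset]

lemma nbhd_tensorProd {α β : Type*} [Fintype α] [Fintype β]
    (G : SimpleGraph α) (H : SimpleGraph β) (u : α) (v : β) :
    nbhd (tensorProd G H) (u, v) = (nbhd G u) ×ˢ (nbhd H v) := by
  ext ⟨a, b⟩
  simp [mem_nbhd, tensorProd, Finset.mem_product]

lemma degc_tensorProd {α β : Type*} [Fintype α] [Fintype β]
    (G : SimpleGraph α) (H : SimpleGraph β) (u : α) (v : β) :
    degc (tensorProd G H) (u, v) = degc G u * degc H v := by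
  simp [degc, nbhd_tensorProd, Finset.card_product]

/-- Degree polynomial of a vertex of the tensor product. -/
theorem dp_tensorProd {α β : Type*} [Fintype α] [Fintype β]
    (G : SimpleGraph α) (H : SimpleGraph β) (u : α) (v : β) :
    dp (tensorProd G H) (u, v)
      = ∑ u' ∈ nbhd G u, ∑ v' ∈ nbhd H v, X ^ (degc G u' * degc H v') := by
  unfold dp
  rw [nbhd_tensorProd, Finset.sum_product]
  exact Finset.sum_congr rfl fun a _ => Finset.sum_congr rfl fun b _ => by
    rw [degc_tensorProd]
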